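/- For any q-tame graded barcode B, the family of barcodes B_t, t ∈ [0,1], obtained by rescaling all endpoints of bars of B by the factor (1−t) (so a finite bar (a,b] becomes ((1−t)a, (1−t)b] and an infinite bar (a,∞) becomes ((1−t)a, ∞)), is a continuous path in the bottleneck distance from B to the barcode whose bars are exactly one copy of (0,∞) in each degree for each infinite bar of B. -/

import Mathlib

open scoped Classical
noncomputable section

/-- A bar: a pair `(a, b)` representing the interval `(a, b]` (with `b = ⊤` for `(a, ∞)`). -/
abbrev Bar : Type := ℝ × EReal

namespace Bar

/-- The interval `(a,b]` is nonempty. -/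
def IsValid (I : Bar) : Prop := (I.1 : EReal) < I.2

/-- The length of a bar. -/
def len (I : Bar) : EReal := I.2 - (I.1 : EReal)

/-- A bar is semi-infinite if its right endpoint is `+∞`. -/
def IsInf (I : Bar) : Prop := I.2 = ⊤

end Bar

/-- `I ⊆ J^{-δ}`, where `(a,b]^{-δ} = (a-δ, b+δ]`. -/
def barSub (I J : Bar) (δ : ℝ) : Prop :=
  J.1 - δ ≤ I.1 ∧ I.2 ≤ J.2 + (δ : EReal)

/-- A barcode: a multiset of nonempty intervals of the form `(a,b]` or `(a,∞)`,
recorded by its multiplicity function. -/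
structure Barcode where
  mult : Bar → ℕ
  valid : ∀ I, mult I ≠ 0 → I.IsValid

namespace Barcode

/-- `m` is a `δ`-matching between the barcodes `B` and `B'`: it matches `m I J` copies of the
bar `I` of `B` with copies of the bar `J` of `B'`; matched bars must be `δ`-close, and
unmatched (deleted) bars must have length at most `2δ`. -/
def IsMatching (B B' : Barcode) (δ : ℝ) (m : Bar → Bar → ℕ) : Prop :=
  (∀ I, {J | m I J ≠ 0}.Finite) ∧
  (∀ J, {I | m I J ≠ 0}.Finite) ∧
  (∀ I, ∑ᶠ J, m I J ≤ B.mult I) ∧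
  (∀ J, ∑ᶠ I, m I J ≤ B'.mult J) ∧
  (∀ I, ∑ᶠ J, m I J < B.mult I → I.len ≤ ((2 * δ : ℝ) : EReal)) ∧
  (∀ J, ∑ᶠ I, m I J < B'.mult J → J.len ≤ ((2 * δ : ℝ) : EReal)) ∧
  (∀ I J, m I J ≠ 0 → barSub I J δ ∧ barSub J I δ)

/-- `B` and `B'` admit a `δ`-matching. -/
def HasMatching (B B' : Barcode) (δ : ℝ) : Prop := ∃ m, IsMatching B B' δ m

/-- The bottleneck distance between two barcodes. -/
def bottleneck (B B' : Barcode) : EReal :=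
  sInf {x : EReal | ∃ δ : ℝ, 0 ≤ δ ∧ x = (δ : EReal) ∧ HasMatching B B' δ}

/-- A barcode is finite if it has finitely many bars counted with multiplicity. -/
def IsFinite (B : Barcode) : Prop := {I | B.mult I ≠ 0}.Finite

/-- A barcode is q-tame if for every `ε > 0` it has finitely many bars of length `≥ ε`. -/
def QTame (B : Barcode) : Prop :=
  ∀ ε : ℝ, 0 < ε → {I | B.mult I ≠ 0 ∧ (ε : EReal) ≤ I.len}.Finite

end Barcode

/-- A ℤ-graded barcode. -/
def GradedBarcode := ℤ → Barcode

namespace GradedBarcode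

/-- A graded barcode is q-tame if for every `ε > 0` only finitely many bars (over all degrees)
have length `≥ ε`. -/
def QTame (B : GradedBarcode) : Prop :=
  ∀ ε : ℝ, 0 < ε → {p : ℤ × Bar | (B p.1).mult p.2 ≠ 0 ∧ (ε : EReal) ≤ p.2.len}.Finite

/-- The number of semi-infinite bars of `B` in degree `n`, counted with multiplicity. -/
def sigmaInf (B : GradedBarcode) (n : ℤ) : ℕ :=
  ∑ᶠ (I : Bar) (_ : I.IsInf), (B n).mult I

/-- The graded bottleneck distance: supremum over the degrees of the degreewise
bottleneck distances. -/
def dist (B B' : GradedBarcode) : EReal :=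
  ⨆ n : ℤ, Barcode.bottleneck (B n) (B' n)

end GradedBarcode

/-- Rescale a bar by a factor `c`: `(a,b] ↦ (ca, cb]`, `(a,∞) ↦ (ca, ∞)`. -/
def scaleBar (c : ℝ) (J : Bar) : Bar :=
  (c * J.1, if J.2 = ⊤ then ⊤ else (c : EReal) * J.2)

/-- The barcode obtained from `B` by rescaling all endpoints of its bars by `c`
(bars that become empty are deleted). -/
def Barcode.scale (B : Barcode) (c : ℝ) : Barcode where
  mult I := if I.IsValid then ∑ᶠ (J : Bar) (_ : scaleBar c J = I), B.mult J else 0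
  valid I h := by
    try dsimp only at h
    by_cases hv : I.IsValid
    · exact hv
    · rw [if_neg hv] at h; exact absurd rfl h

/-- Degreewise rescaling of a graded barcode. -/
def GradedBarcode.scale (B : GradedBarcode) (c : ℝ) : GradedBarcode :=
  fun n => (B n).scale c

/-- The graded barcode having, in each degree `n`, exactly `σ^∞(B)(n)` copies of the bar
`(0, ∞)` and no other bars. -/
def GradedBarcode.infSkeleton (B : GradedBarcode) : GradedBarcode := fun n =>
  { mult := fun I => if I = ((0 : ℝ), (⊤ : EReal)) then B.sigmaInf n else 0
    valid := fun I h => by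
      try dsimp only at h
      by_cases hI : I = ((0 : ℝ), (⊤ : EReal))
      · subst hI; exact EReal.coe_lt_top 0
      · rw [if_neg hI] at h; exact absurd rfl h }

/-! ### Auxiliary lemmas -/

section Aux

lemma Barcode.ext' {B B' : Barcode} (h : B.mult = B'.mult) : B = B' := by
  cases B; cases B'; cases h; rfl

lemma bar_cases {a : ℝ} {b : EReal} (h : (a : EReal) < b) :
    b = ⊤ ∨ ∃ r : ℝ, b = (r : EReal) ∧ a < r := by
  induction b using EReal.rec with
  | bot => exact absurd h (by simp)
  | coe r => exact Or.inr ⟨r, rfl, EReal.coe_lt_coe_iff.1 h⟩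
  | top => exact Or.inl rfl

lemma scaleBar_top (c : ℝ) {J : Bar} (h : J.2 = ⊤) : scaleBar c J = (c * J.1, ⊤) := by
  simp [scaleBar, h]

lemma scaleBar_coe (c : ℝ) {J : Bar} {r : ℝ} (h : J.2 = (r : EReal)) :
    scaleBar c J = (c * J.1, ((c * r : ℝ) : EReal)) := by
  simp [scaleBar, h, ← EReal.coe_mul]

lemma valid_scaleBar_top (c : ℝ) {J : Bar} (h : J.2 = ⊤) : (scaleBar c J).IsValid := by
  rw [scaleBar_top c h]; exact EReal.coe_lt_top _

lemma len_top {I : Bar} (h : I.2 = ⊤) : I.len = ⊤ := by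
  simp [Bar.len, h]

lemma len_coe {I : Bar} {r : ℝ} (h : I.2 = (r : EReal)) :
    I.len = ((r - I.1 : ℝ) : EReal) := by
  rw [Bar.len, h, EReal.coe_sub]

lemma scale_mult (B : Barcode) (c : ℝ) (I : Bar) :
    (B.scale c).mult I =
      if I.IsValid then ∑ᶠ J ∈ {J : Bar | scaleBar c J = I}, B.mult J else 0 := rfl

/-- `scaleBar c` is injective on valid bars for `c > 0`. -/
lemma scaleBar_inj {c : ℝ} (hc : 0 < c) {J K : Bar} (hJ : J.IsValid) (hK : K.IsValid)
    (h : scaleBar c J = scaleBar c K) : J = K := by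
  have h1 : J.1 = K.1 := by
    have := congrArg Prod.fst h
    rcases bar_cases hJ with hb | ⟨r, hb, _⟩ <;> rcases bar_cases hK with hb' | ⟨r', hb', _⟩ <;>
      simp only [scaleBar] at this <;>
      exact mul_left_cancel₀ (ne_of_gt hc) this
  have h2 : J.2 = K.2 := by
    have := congrArg Prod.snd h
    rcases bar_cases hJ with hb | ⟨r, hb, _⟩ <;> rcases bar_cases hK with hb' | ⟨r', hb', _⟩
    · rw [hb, hb']
    · rw [scaleBar_top c hb, scaleBar_coe c hb'] at this
      exact absurd this.symm (EReal.coe_ne_top _)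
    · rw [scaleBar_top c hb', scaleBar_coe c hb] at this
      exact absurd this (EReal.coe_ne_top _)
    · rw [scaleBar_coe c hb, scaleBar_coe c hb'] at this
      rw [hb, hb', EReal.coe_eq_coe_iff]
      exact mul_left_cancel₀ (ne_of_gt hc) (EReal.coe_eq_coe_iff.1 this)
  exact Prod.ext h1 h2

lemma scaleBar_zero_coe {J : Bar} {r : ℝ} (h : J.2 = (r : EReal)) :
    scaleBar 0 J = ((0 : ℝ), ((0 : ℝ) : EReal)) := by
  rw [scaleBar_coe 0 h]; norm_num

lemma scaleBar_zero_top {J : Bar} (h : J.2 = ⊤) :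
    scaleBar 0 J = ((0 : ℝ), (⊤ : EReal)) := by
  rw [scaleBar_top 0 h]; norm_num

/-- If `J` is valid and `scaleBar 0 J` is valid then `J` is infinite (and the image is `(0,∞)`). -/
lemma scaleBar_zero_valid {J : Bar} (hJ : J.IsValid) (h : (scaleBar 0 J).IsValid) :
    J.2 = ⊤ := by
  rcases bar_cases hJ with hb | ⟨r, hb, _⟩
  · exact hb
  · rw [scaleBar_zero_coe hb] at h
    exact absurd h (lt_irrefl _)

/-- The matching used in the continuity proof. -/
def mymatch (Bn : Barcode) (Fn : Finset Bar) (c c' : ℝ) (I I' : Bar) : ℕ :=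
  ∑ J ∈ Fn.filter
      (fun J => scaleBar c J = I ∧ scaleBar c' J = I' ∧ I.IsValid ∧ I'.IsValid),
    Bn.mult J

lemma mymatch_swap (Bn : Barcode) (Fn : Finset Bar) (c c' : ℝ) (I I' : Bar) :
    mymatch Bn Fn c' c I' I = mymatch Bn Fn c c' I I' := by
  unfold mymatch
  congr 1
  ext J
  simp only [Finset.mem_filter]
  tauto

lemma mymatch_rowsum (Bn : Barcode) (Fn : Finset Bar) (c c' : ℝ) (I : Bar) :
    ∑ᶠ I', mymatch Bn Fn c c' I I' =
      ∑ J ∈ Fn.filter (fun J => scaleBar c J = I ∧ I.IsValid ∧ (scaleBar c' J).IsValid),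
        Bn.mult J := by
  rw [finsum_eq_sum_of_support_subset (fun I' => mymatch Bn Fn c c' I I')
    (s := Fn.image (scaleBar c')) ?_]
  · rw [← Finset.sum_fiberwise_of_maps_to (g := scaleBar c')
      (t := Fn.image (scaleBar c'))
      (fun J hJ => Finset.mem_image_of_mem _ (Finset.mem_filter.1 hJ).1) Bn.mult]
    apply Finset.sum_congr rfl
    intro y _
    unfold mymatch
    rw [Finset.filter_filter]
    refine Finset.sum_congr ?_ (fun _ _ => rfl)
    apply Finset.filter_congr
    intro J _
    constructor
    · rintro ⟨h1, h2, h3, h4⟩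
      exact ⟨⟨h1, h3, h2 ▸ h4⟩, h2⟩
    · rintro ⟨⟨h1, h3, h4⟩, h2⟩
      exact ⟨h1, h2, h3, h2 ▸ h4⟩
  · intro I' hI'
    obtain ⟨J, hJ, -⟩ := Finset.exists_ne_zero_of_sum_ne_zero hI'
    have hJ' := Finset.mem_filter.1 hJ
    exact Finset.coe_subset.2 (fun x hx => hx) <|
      Finset.mem_coe.2 ((hJ'.2.2.1) ▸ Finset.mem_image_of_mem _ hJ'.1)

lemma mymatch_colsum (Bn : Barcode) (Fn : Finset Bar) (c c' : ℝ) (I' : Bar) :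
    ∑ᶠ I, mymatch Bn Fn c c' I I' =
      ∑ J ∈ Fn.filter (fun J => scaleBar c' J = I' ∧ I'.IsValid ∧ (scaleBar c J).IsValid),
        Bn.mult J := by
  have : (fun I => mymatch Bn Fn c c' I I') = fun I => mymatch Bn Fn c' c I' I := by
    funext I; exact (mymatch_swap Bn Fn c c' I I').symm
  rw [show (∑ᶠ I, mymatch Bn Fn c c' I I') = ∑ᶠ I, mymatch Bn Fn c' c I' I from
    congrArg _ this]
  exact mymatch_rowsum Bn Fn c' c I'

/-- The key one-sided estimate for the matching. -/
lemma side_bounds (Bn : Barcode) (Fn : Finset Bar) (ε δ c c' : ℝ)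
    (hFn : ∀ J, J ∈ Fn ↔ Bn.mult J ≠ 0 ∧ (ε : EReal) ≤ J.len)
    (hc0 : 0 ≤ c) (hc1 : c ≤ 1) (hc'0 : 0 ≤ c')
    (hεδ : ε ≤ 2 * δ)
    (hsmall : c' = 0 → ∀ J ∈ Fn, ∀ r : ℝ, J.2 = (r : EReal) → c * (r - J.1) ≤ 2 * δ)
    (I : Bar) :
    (∑ J ∈ Fn.filter (fun J => scaleBar c J = I ∧ I.IsValid ∧ (scaleBar c' J).IsValid),
        Bn.mult J ≤ (Bn.scale c).mult I) ∧
      (∑ J ∈ Fn.filter (fun J => scaleBar c J = I ∧ I.IsValid ∧ (scaleBar c' J).IsValid),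
          Bn.mult J < (Bn.scale c).mult I → I.len ≤ ((2 * δ : ℝ) : EReal)) := by
  classical
  set R : Finset Bar :=
    Fn.filter (fun J => scaleBar c J = I ∧ I.IsValid ∧ (scaleBar c' J).IsValid) with hR
  set S : Set Bar := {J : Bar | scaleBar c J = I} with hS
  have hRsub : ∀ J ∈ R, J ∈ S ∩ Function.support Bn.mult := by
    intro J hJ
    have h1 := Finset.mem_filter.1 hJ
    exact ⟨h1.2.1, ((hFn J).1 h1.1).1⟩
  -- finiteness of the fiber, given an element of it and validity of `I`
  have hfin_of_mem : ∀ J₀ ∈ S ∩ Function.support Bn.mult, I.IsValid →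
      (S ∩ Function.support Bn.mult).Finite := by
    intro J₀ hJ₀ hI
    have hJ₀v : J₀.IsValid := Bn.valid _ hJ₀.2
    rcases eq_or_lt_of_le hc0 with hc | hc
    · -- c = 0
      have hc : c = 0 := hc.symm
      subst hc
      have hJ₀top : J₀.2 = ⊤ := scaleBar_zero_valid hJ₀v (hJ₀.1 ▸ hI)
      have hI0 : I = ((0 : ℝ), (⊤ : EReal)) := hJ₀.1 ▸ scaleBar_zero_top hJ₀top
      apply Set.Finite.subset Fn.finite_toSet
      intro J hJ
      have hJv : J.IsValid := Bn.valid _ hJ.2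
      have hJtop : J.2 = ⊤ := scaleBar_zero_valid hJv (by rw [hJ.1, hI0]; exact EReal.coe_lt_top 0)
      exact Finset.mem_coe.2 ((hFn J).2 ⟨hJ.2, (len_top hJtop).symm ▸ le_top⟩)
    · -- c > 0 : the fiber is a subsingleton
      apply Set.Subsingleton.finite
      intro J hJ K hK
      exact scaleBar_inj hc (Bn.valid _ hJ.2) (Bn.valid _ hK.2) (hJ.1.trans hK.1.symm)
  constructor
  · -- the row sum is at most the multiplicity
    by_cases hz : ∑ J ∈ R, Bn.mult J = 0
    · exact le_trans (le_of_eq hz) (Nat.zero_le _)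
    · obtain ⟨J₀, hJ₀R, -⟩ := Finset.exists_ne_zero_of_sum_ne_zero hz
      have hI : I.IsValid := (Finset.mem_filter.1 hJ₀R).2.2.1
      have hfin := hfin_of_mem J₀ (hRsub J₀ hJ₀R) hI
      rw [scale_mult, if_pos hI, finsum_mem_eq_sum Bn.mult hfin]
      apply Finset.sum_le_sum_of_subset
      intro J hJ
      exact hfin.mem_toFinset.2 (hRsub J hJ)
  · -- the deletion condition
    intro hlt
    have hI : I.IsValid := by
      by_contra hI
      rw [scale_mult, if_neg hI] at hlt
      omega
    rw [scale_mult, if_pos hI] at hlt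
    have hfin : (S ∩ Function.support Bn.mult).Finite := by
      by_contra h
      rw [finsum_mem_eq_zero_of_infinite h] at hlt
      omega
    rw [finsum_mem_eq_sum Bn.mult hfin] at hlt
    have hsub : R ⊆ hfin.toFinset := fun J hJ => hfin.mem_toFinset.2 (hRsub J hJ)
    have hne : R ≠ hfin.toFinset := by
      intro h
      rw [h] at hlt
      exact lt_irrefl _ hlt
    obtain ⟨J, hJmem, hJnR⟩ := Finset.exists_of_ssubset (ssubset_of_subset_of_ne hsub hne)
    have hJS := hfin.mem_toFinset.1 hJmem
    have hJv : J.IsValid := Bn.valid _ hJS.2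
    have hJI : scaleBar c J = I := hJS.1
    rcases bar_cases hJv with htop | ⟨r, hr, har⟩
    · -- infinite bars are always matched: contradiction
      exfalso
      apply hJnR
      rw [hR, Finset.mem_filter]
      refine ⟨(hFn J).2 ⟨hJS.2, (len_top htop).symm ▸ le_top⟩, hJI, hI, valid_scaleBar_top c' htop⟩
    · -- finite bar
      have hIeq : I = (c * J.1, ((c * r : ℝ) : EReal)) := hJI ▸ scaleBar_coe c hr
      have hIlen : I.len = ((c * r - c * J.1 : ℝ) : EReal) := by
        rw [hIeq, len_coe rfl]
      rw [hIlen, EReal.coe_le_coe_iff]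
      by_cases hJFn : J ∈ Fn
      · -- `J` is long, so the only possible failure is `c' = 0`
        have hval : ¬ (scaleBar c' J).IsValid := by
          intro hval
          exact hJnR (by rw [hR, Finset.mem_filter]; exact ⟨hJFn, hJI, hI, hval⟩)
        have hc'0' : c' = 0 := by
          by_contra hne0
          apply hval
          rw [scaleBar_coe c' hr]
          show ((c' * J.1 : ℝ) : EReal) < ((c' * r : ℝ) : EReal)
          rw [EReal.coe_lt_coe_iff]
          have : 0 < c' := lt_of_le_of_ne hc'0 (Ne.symm hne0)
          nlinarith
        have := hsmall hc'0' J hJFn r hr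
        nlinarith
      · -- `J` is short
        have hshort : ¬ ((ε : EReal) ≤ J.len) := by
          intro hlen
          exact hJFn ((hFn J).2 ⟨hJS.2, hlen⟩)
        rw [len_coe hr] at hshort
        have : ¬ (ε ≤ r - J.1) := fun h => hshort (EReal.coe_le_coe_iff.2 h)
        nlinarith

/-- The closeness condition for the matching. -/
lemma close_bounds (Bn : Barcode) (Fn : Finset Bar) (δ c c' : ℝ)
    (hbound : ∀ J ∈ Fn, |c - c'| * |J.1| ≤ δ ∧ ∀ r : ℝ, J.2 = (r : EReal) → |c - c'| * |r| ≤ δ)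
    (hvalid : ∀ J ∈ Fn, J.IsValid)
    (I I' : Bar) (h : mymatch Bn Fn c c' I I' ≠ 0) :
    barSub I I' δ ∧ barSub I' I δ := by
  obtain ⟨J, hJ, -⟩ := Finset.exists_ne_zero_of_sum_ne_zero h
  have hJ' := Finset.mem_filter.1 hJ
  have hJFn := hJ'.1
  obtain ⟨hI, hI', -, -⟩ := hJ'.2
  have hJv : J.IsValid := hvalid J hJFn
  have ha : |c * J.1 - c' * J.1| ≤ δ := by
    rw [← sub_mul, abs_mul]; exact (hbound J hJFn).1
  have ha1 := abs_le.1 ha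
  rcases bar_cases hJv with htop | ⟨r, hr, har⟩
  · rw [← hI, ← hI', scaleBar_top c htop, scaleBar_top c' htop]
    refine ⟨⟨by dsimp; linarith, ?_⟩, ⟨by dsimp; linarith, ?_⟩⟩ <;>
      · show (⊤ : EReal) ≤ ⊤ + (δ : EReal)
        rw [EReal.top_add_coe]
  · have hb : |c * r - c' * r| ≤ δ := by
      rw [← sub_mul, abs_mul]; exact (hbound J hJFn).2 r hr
    have hb1 := abs_le.1 hb
    rw [← hI, ← hI', scaleBar_coe c hr, scaleBar_coe c' hr]
    refine ⟨⟨by dsimp; linarith, ?_⟩, ⟨by dsimp; linarith, ?_⟩⟩ <;>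
      · show ((_ : ℝ) : EReal) ≤ ((_ : ℝ) : EReal) + (δ : EReal)
        rw [← EReal.coe_add, EReal.coe_le_coe_iff]
        linarith

end Aux

/-- For a q-tame graded barcode `B`, rescaling all bars by `(1-t)` gives a
path, continuous in the bottleneck distance, from `B` (at `t = 0`) to the barcode with exactly
one bar `(0,∞)` in each degree for each infinite bar of `B` (at `t = 1`). -/
theorem scale_path_continuous (B : GradedBarcode) (hB : B.QTame) :
    (∀ t ∈ Set.Icc (0 : ℝ) 1, ∀ ε : ℝ, 0 < ε → ∃ η : ℝ, 0 < η ∧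
      ∀ s ∈ Set.Icc (0 : ℝ) 1, |s - t| < η →
        GradedBarcode.dist (B.scale (1 - s)) (B.scale (1 - t)) < (ε : EReal)) ∧
    B.scale (1 - 0) = B ∧
    B.scale (1 - 1) = B.infSkeleton := by
  refine ⟨?_, ?_, ?_⟩
  · -- continuity
    rintro t ⟨ht0, ht1⟩ ε hε
    have hF := hB ε hε
    set F : Finset (ℤ × Bar) := hF.toFinset with hFdef
    set M : ℝ := 1 + ∑ p ∈ F, (|p.2.1| + |p.2.2.toReal|) with hMdef
    have hsum_nonneg : (0 : ℝ) ≤ ∑ p ∈ F, (|p.2.1| + |p.2.2.toReal|) :=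
      Finset.sum_nonneg fun p _ => add_nonneg (abs_nonneg _) (abs_nonneg _)
    have hM1 : 1 ≤ M := by rw [hMdef]; linarith
    have hMpos : 0 < M := lt_of_lt_of_le one_pos hM1
    have hbound : ∀ p ∈ F, |p.2.1| ≤ M ∧ ∀ r : ℝ, p.2.2 = (r : EReal) → |r| ≤ M := by
      intro p hp
      have h1 : |p.2.1| + |p.2.2.toReal| ≤ ∑ q ∈ F, (|q.2.1| + |q.2.2.toReal|) :=
        Finset.single_le_sum (f := fun q : ℤ × Bar => |q.2.1| + |q.2.2.toReal|)
          (fun q _ => add_nonneg (abs_nonneg _) (abs_nonneg _)) hp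
      constructor
      · have := abs_nonneg p.2.2.toReal
        rw [hMdef]; linarith
      · intro r hr
        have h2 : p.2.2.toReal = r := by rw [hr]; exact EReal.toReal_coe r
        have := abs_nonneg p.2.1
        rw [hMdef, ← h2]; linarith
    set η : ℝ := ε / (2 * M) with hηdef
    have hηpos : 0 < η := by positivity
    refine ⟨η, hηpos, ?_⟩
    rintro s ⟨hs0, hs1⟩ hst
    set δ : ℝ := ε / 2 with hδdef
    have hδ0 : 0 ≤ δ := by positivity
    have hηM : η * M = δ := by
      rw [hηdef, hδdef]; field_simp; try ring
    have hηM2 : η * (2 * M) = 2 * δ := by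
      rw [hηdef, hδdef]; field_simp; try ring
    have hcc' : |(1 - s) - (1 - t)| < η := by
      rw [show (1 - s) - (1 - t) = -(s - t) by ring, abs_neg]; exact hst
    have hbn : ∀ n : ℤ,
        Barcode.bottleneck ((B.scale (1 - s)) n) ((B.scale (1 - t)) n) ≤ (δ : EReal) := by
      intro n
      set Fn : Finset Bar := (F.filter (fun p => p.1 = n)).image Prod.snd with hFndef
      have hFnmem : ∀ J, J ∈ Fn ↔ (B n).mult J ≠ 0 ∧ (ε : EReal) ≤ J.len := by
        intro J
        rw [hFndef]
        simp only [Finset.mem_image, Finset.mem_filter]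
        constructor
        · rintro ⟨p, ⟨hp, hp1⟩, hp2⟩
          have := hF.mem_toFinset.1 hp
          rw [← hp1, ← hp2]
          exact this
        · intro h
          exact ⟨(n, J), ⟨hF.mem_toFinset.2 h, rfl⟩, rfl⟩
      have hFnF : ∀ J ∈ Fn, (n, J) ∈ F := by
        intro J hJ
        exact hF.mem_toFinset.2 ((hFnmem J).1 hJ)
      have hFnvalid : ∀ J ∈ Fn, J.IsValid := by
        intro J hJ
        exact (B n).valid J ((hFnmem J).1 hJ).1
      have hFnbound : ∀ J ∈ Fn, |J.1| ≤ M ∧ ∀ r : ℝ, J.2 = (r : EReal) → |r| ≤ M := by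
        intro J hJ
        exact hbound (n, J) (hFnF J hJ)
      -- bounds needed by `side_bounds`
      have hcs0 : (0 : ℝ) ≤ 1 - s := by linarith
      have hcs1 : 1 - s ≤ 1 := by linarith
      have hct0 : (0 : ℝ) ≤ 1 - t := by linarith
      have hct1 : 1 - t ≤ 1 := by linarith
      have hεδ : ε ≤ 2 * δ := by rw [hδdef]; linarith
      have hsmall : ∀ c c' : ℝ, (c = 1 - s ∧ c' = 1 - t) ∨ (c = 1 - t ∧ c' = 1 - s) →
          c' = 0 → ∀ J ∈ Fn, ∀ r : ℝ, J.2 = (r : EReal) → c * (r - J.1) ≤ 2 * δ := by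
        rintro c c' hcase hc'0 J hJ r hr
        obtain ⟨hJa, hJb⟩ := hFnbound J hJ
        have hrM := hJb r hr
        have haM := hJa
        have hcη : c < η := by
          rcases hcase with ⟨rfl, rfl⟩ | ⟨rfl, rfl⟩
          · calc 1 - s = |(1 - s) - (1 - t)| := by
                  rw [hc'0, sub_zero, abs_of_nonneg (by linarith)]
              _ < η := hcc'
          · calc 1 - t = |(1 - s) - (1 - t)| := by
                  rw [hc'0, zero_sub, abs_neg, abs_of_nonneg (by linarith)]
              _ < η := hcc'
        have hc0 : 0 ≤ c := by
          rcases hcase with ⟨rfl, -⟩ | ⟨rfl, -⟩ <;> linarith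
        have h2M : r - J.1 ≤ 2 * M := by
          have := abs_le.1 hJa
          have := abs_le.1 hrM
          linarith
        have har : J.1 < r := by
          have := hFnvalid J hJ
          rcases bar_cases this with htop | ⟨r', hr', har'⟩
          · rw [htop] at hr; exact absurd hr.symm (EReal.coe_ne_top r)
          · rw [hr'] at hr
            rw [EReal.coe_eq_coe_iff.1 hr] at har'
            exact har'
        calc c * (r - J.1) ≤ η * (2 * M) := by nlinarith
          _ = 2 * δ := hηM2
      have hclose : ∀ J ∈ Fn,
          |(1 - s) - (1 - t)| * |J.1| ≤ δ ∧
            ∀ r : ℝ, J.2 = (r : EReal) → |(1 - s) - (1 - t)| * |r| ≤ δ := by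
        intro J hJ
        obtain ⟨hJa, hJb⟩ := hFnbound J hJ
        have habs : (0 : ℝ) ≤ |(1 - s) - (1 - t)| := abs_nonneg _
        constructor
        · calc |(1 - s) - (1 - t)| * |J.1| ≤ η * M := by nlinarith [abs_nonneg J.1]
            _ = δ := hηM
        · intro r hr
          have := hJb r hr
          calc |(1 - s) - (1 - t)| * |r| ≤ η * M := by nlinarith [abs_nonneg r]
            _ = δ := hηM
      apply sInf_le
      refine ⟨δ, hδ0, rfl, mymatch (B n) Fn (1 - s) (1 - t), ?_, ?_, ?_, ?_, ?_, ?_, ?_⟩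
      · -- finiteness of rows
        intro I
        apply Set.Finite.subset (Fn.image (scaleBar (1 - t))).finite_toSet
        intro I' hI'
        obtain ⟨J, hJ, -⟩ := Finset.exists_ne_zero_of_sum_ne_zero hI'
        have hJ' := Finset.mem_filter.1 hJ
        exact Finset.mem_coe.2 (hJ'.2.2.1 ▸ Finset.mem_image_of_mem _ hJ'.1)
      · -- finiteness of columns
        intro I'
        apply Set.Finite.subset (Fn.image (scaleBar (1 - s))).finite_toSet
        intro I hI
        obtain ⟨J, hJ, -⟩ := Finset.exists_ne_zero_of_sum_ne_zero hI
        have hJ' := Finset.mem_filter.1 hJ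
        exact Finset.mem_coe.2 (hJ'.2.1 ▸ Finset.mem_image_of_mem _ hJ'.1)
      · -- row sums
        intro I
        rw [mymatch_rowsum]
        exact (side_bounds (B n) Fn ε δ (1 - s) (1 - t) hFnmem hcs0 hcs1 hct0 hεδ
          (hsmall _ _ (Or.inl ⟨rfl, rfl⟩)) I).1
      · -- column sums
        intro I'
        rw [mymatch_colsum]
        exact (side_bounds (B n) Fn ε δ (1 - t) (1 - s) hFnmem hct0 hct1 hcs0 hεδ
          (hsmall _ _ (Or.inr ⟨rfl, rfl⟩)) I').1
      · -- deletion on the left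
        intro I hlt
        rw [mymatch_rowsum] at hlt
        exact (side_bounds (B n) Fn ε δ (1 - s) (1 - t) hFnmem hcs0 hcs1 hct0 hεδ
          (hsmall _ _ (Or.inl ⟨rfl, rfl⟩)) I).2 hlt
      · -- deletion on the right
        intro I' hlt
        rw [mymatch_colsum] at hlt
        exact (side_bounds (B n) Fn ε δ (1 - t) (1 - s) hFnmem hct0 hct1 hcs0 hεδ
          (hsmall _ _ (Or.inr ⟨rfl, rfl⟩)) I').2 hlt
      · -- closeness
        intro I I' hm
        exact close_bounds (B n) Fn δ (1 - s) (1 - t) hclose hFnvalid I I' hm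
    have hlt : (δ : EReal) < (ε : EReal) := by
      rw [EReal.coe_lt_coe_iff, hδdef]; linarith
    exact lt_of_le_of_lt (iSup_le hbn) hlt
  · -- the path starts at B
    funext n
    show (B n).scale (1 - 0) = B n
    norm_num
    apply Barcode.ext'
    funext I
    have hscale1 : ∀ J : Bar, scaleBar 1 J = J := by
      intro J
      unfold scaleBar
      by_cases h : J.2 = ⊤
      · rw [if_pos h, one_mul, ← h]
      · rw [if_neg h, one_mul]
        show (J.1, (1 : EReal) * J.2) = J
        rw [one_mul]
    show (if I.IsValid then ∑ᶠ (J : Bar) (_ : scaleBar 1 J = I), (B n).mult J else 0)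
      = (B n).mult I
    by_cases h : I.IsValid
    · rw [if_pos h]
      simp_rw [hscale1]
      rw [show (∑ᶠ (J : Bar) (_ : J = I), (B n).mult J)
          = ∑ᶠ J ∈ {J : Bar | J = I}, (B n).mult J from rfl,
        Set.setOf_eq_eq_singleton, finsum_mem_singleton]
    · rw [if_neg h]
      by_cases h0 : (B n).mult I = 0
      · exact h0.symm
      · exact absurd ((B n).valid I h0) h
  · -- the path ends at the infinite skeleton
    funext n
    show (B n).scale (1 - 1) = B.infSkeleton n
    norm_num
    apply Barcode.ext'
    funext I
    show (if I.IsValid then ∑ᶠ J ∈ {J : Bar | scaleBar 0 J = I}, (B n).mult J else 0)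
      = if I = ((0 : ℝ), (⊤ : EReal)) then B.sigmaInf n else 0
    by_cases hI : I = ((0 : ℝ), (⊤ : EReal))
    · subst hI
      rw [if_pos rfl, if_pos (show Bar.IsValid ((0 : ℝ), (⊤ : EReal)) from EReal.coe_lt_top 0)]
      rw [show B.sigmaInf n = ∑ᶠ J ∈ {J : Bar | J.IsInf}, (B n).mult J from rfl]
      apply finsum_mem_inter_support_eq
      ext J
      simp only [Set.mem_inter_iff, Set.mem_setOf_eq, Function.mem_support]
      constructor
      · rintro ⟨h1, h2⟩
        have hJv : J.IsValid := (B n).valid J h2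
        exact ⟨scaleBar_zero_valid hJv (h1 ▸ EReal.coe_lt_top 0), h2⟩
      · rintro ⟨h1, h2⟩
        exact ⟨scaleBar_zero_top h1, h2⟩
    · rw [if_neg hI]
      by_cases h : I.IsValid
      · rw [if_pos h]
        rw [← finsum_mem_inter_support]
        have : {J : Bar | scaleBar 0 J = I} ∩ Function.support (B n).mult = ∅ := by
          ext J
          simp only [Set.mem_inter_iff, Set.mem_setOf_eq, Function.mem_support,
            Set.mem_empty_iff_false, iff_false, not_and]
          intro h1 h2
          have hJv : J.IsValid := (B n).valid J h2
          have hJtop : J.2 = ⊤ := scaleBar_zero_valid hJv (h1 ▸ h)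
          exact hI (h1 ▸ scaleBar_zero_top hJtop)
        rw [this, finsum_mem_empty]
      · rw [if_neg h]
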